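/- Compute: (4/π²) ∫₀^{π/2} ∫_π^{3π/2} (α(θ,ψ)/(2π))² dψ dθ = 17/96, where α(θ,ψ) = ψ - θ if ψ ≤ θ + π and α(θ,ψ) = 2π + θ - ψ otherwise. -/

import Mathlib

open Real intervalIntegral

lemma inner_fun_eq_min (θ ψ : ℝ) :
    ((if ψ ≤ θ + π then ψ - θ else 2 * π + θ - ψ) / (2 * π)) ^ 2
      = (min (ψ - θ) (2 * π + θ - ψ) / (2 * π)) ^ 2 := by
  split_ifs with h
  · rw [min_eq_left (by linarith)]
  · rw [min_eq_right (by linarith)]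

lemma inner_eval (θ : ℝ) (h0 : 0 ≤ θ) (h1 : θ ≤ π / 2) :
    (∫ ψ in (π)..(3 * π / 2),
        ((if ψ ≤ θ + π then ψ - θ else 2 * π + θ - ψ) / (2 * π)) ^ 2)
      = (2 * π ^ 3 - (π - θ) ^ 3 - (θ + π / 2) ^ 3) / (12 * π ^ 2) := by
  have hπ := pi_pos
  have hcont : Continuous (fun ψ : ℝ =>
      ((if ψ ≤ θ + π then ψ - θ else 2 * π + θ - ψ) / (2 * π)) ^ 2) := by
    have : (fun ψ : ℝ =>
        ((if ψ ≤ θ + π then ψ - θ else 2 * π + θ - ψ) / (2 * π)) ^ 2)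
        = fun ψ : ℝ => (min (ψ - θ) (2 * π + θ - ψ) / (2 * π)) ^ 2 := by
      funext ψ; exact inner_fun_eq_min θ ψ
    rw [this]; fun_prop
  have hsplit := intervalIntegral.integral_add_adjacent_intervals
    (a := π) (b := θ + π) (c := 3 * π / 2) (μ := MeasureTheory.volume)
    (hcont.intervalIntegrable _ _) (hcont.intervalIntegrable _ _)
  rw [← hsplit]
  have h1eq : (∫ ψ in (π)..(θ + π),
      ((if ψ ≤ θ + π then ψ - θ else 2 * π + θ - ψ) / (2 * π)) ^ 2)
      = (π ^ 3 - (π - θ) ^ 3) / (12 * π ^ 2) := by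
    have hco : (∫ ψ in (π)..(θ + π),
        ((if ψ ≤ θ + π then ψ - θ else 2 * π + θ - ψ) / (2 * π)) ^ 2)
        = ∫ ψ in (π)..(θ + π), ((ψ - θ) / (2 * π)) ^ 2 := by
      apply intervalIntegral.integral_congr
      intro ψ hψ
      rw [Set.uIcc_of_le (by linarith)] at hψ
      simp only
      rw [if_pos hψ.2]
    rw [hco]
    have : ∀ ψ : ℝ, HasDerivAt (fun x => (x - θ) ^ 3 / (12 * π ^ 2))
        (((ψ - θ) / (2 * π)) ^ 2) ψ := by
      intro ψ
      have h := (((hasDerivAt_id ψ).sub_const θ).pow 3).div_const (12 * π ^ 2)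
      refine h.congr_deriv ?_
      simp only [id]
      field_simp
      ring
    rw [intervalIntegral.integral_eq_sub_of_hasDerivAt (fun ψ _ => this ψ)
      ((by fun_prop : Continuous fun ψ : ℝ => ((ψ - θ) / (2 * π)) ^ 2).intervalIntegrable _ _)]
    ring
  have h2eq : (∫ ψ in (θ + π)..(3 * π / 2),
      ((if ψ ≤ θ + π then ψ - θ else 2 * π + θ - ψ) / (2 * π)) ^ 2)
      = (π ^ 3 - (θ + π / 2) ^ 3) / (12 * π ^ 2) := by
    have hco : (∫ ψ in (θ + π)..(3 * π / 2),
        ((if ψ ≤ θ + π then ψ - θ else 2 * π + θ - ψ) / (2 * π)) ^ 2)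
        = ∫ ψ in (θ + π)..(3 * π / 2), ((2 * π + θ - ψ) / (2 * π)) ^ 2 := by
      apply intervalIntegral.integral_congr
      intro ψ hψ
      rw [Set.uIcc_of_le (by linarith)] at hψ
      simp only
      split_ifs with h
      · have : ψ = θ + π := le_antisymm h hψ.1
        rw [this]; ring_nf
      · rfl
    rw [hco]
    have : ∀ ψ : ℝ, HasDerivAt (fun x => -(2 * π + θ - x) ^ 3 / (12 * π ^ 2))
        (((2 * π + θ - ψ) / (2 * π)) ^ 2) ψ := by
      intro ψ
      have hin : HasDerivAt (fun x : ℝ => 2 * π + θ - x) (-1) ψ := by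
        simpa using (hasDerivAt_id ψ).const_sub (2 * π + θ)
      have h := ((hin.pow 3).neg).div_const (12 * π ^ 2)
      refine h.congr_deriv ?_
      field_simp
      ring
    rw [intervalIntegral.integral_eq_sub_of_hasDerivAt (fun ψ _ => this ψ)
      ((by fun_prop : Continuous fun ψ : ℝ => ((2 * π + θ - ψ) / (2 * π)) ^ 2).intervalIntegrable _ _)]
    ring
  rw [h1eq, h2eq]
  ring

theorem width2_transition_integral_1 :
    (4 / π ^ 2) *
      ∫ θ in (0 : ℝ)..(π / 2), ∫ ψ in (π)..(3 * π / 2),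
        ((if ψ ≤ θ + π then ψ - θ else 2 * π + θ - ψ) / (2 * π)) ^ 2 = 17 / 96 := by
  have hπ := pi_pos
  have hne : π ≠ 0 := pi_ne_zero
  have houter : (∫ θ in (0 : ℝ)..(π / 2), ∫ ψ in (π)..(3 * π / 2),
      ((if ψ ≤ θ + π then ψ - θ else 2 * π + θ - ψ) / (2 * π)) ^ 2)
      = ∫ θ in (0 : ℝ)..(π / 2),
        (2 * π ^ 3 - (π - θ) ^ 3 - (θ + π / 2) ^ 3) / (12 * π ^ 2) := by
    apply intervalIntegral.integral_congr
    intro θ hθ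
    rw [Set.uIcc_of_le (by linarith)] at hθ
    exact inner_eval θ hθ.1 hθ.2
  rw [houter]
  have hder : ∀ θ : ℝ, HasDerivAt (fun x =>
      (2 * π ^ 3 * x + (π - x) ^ 4 / 4 - (x + π / 2) ^ 4 / 4) / (12 * π ^ 2))
      ((2 * π ^ 3 - (π - θ) ^ 3 - (θ + π / 2) ^ 3) / (12 * π ^ 2)) θ := by
    intro θ
    have h1 : HasDerivAt (fun x : ℝ => π - x) (-1) θ := by
      simpa using (hasDerivAt_id θ).const_sub π
    have h2 : HasDerivAt (fun x : ℝ => x + π / 2) 1 θ := by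
      simpa using (hasDerivAt_id θ).add_const (π / 2)
    have h3 := ((((hasDerivAt_id θ).const_mul (2 * π ^ 3)).add ((h1.pow 4).div_const 4)).sub
      ((h2.pow 4).div_const 4)).div_const (12 * π ^ 2)
    refine h3.congr_deriv ?_
    field_simp
    ring
  rw [intervalIntegral.integral_eq_sub_of_hasDerivAt (fun θ _ => hder θ)
    ((by fun_prop : Continuous fun θ : ℝ =>
      (2 * π ^ 3 - (π - θ) ^ 3 - (θ + π / 2) ^ 3) / (12 * π ^ 2)).intervalIntegrable _ _)]
  field_simp
  ring
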